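/- Suppose x is a contingency table of paths of length T ≥ 2 over {1,2} with b_{21}(x) = 0 and b_{12}(x) = 1. Then x is the unique contingency table in its fiber: any table y with b_{ij}(y) = b_{ij}(x) for all i,j satisfies y = x. -/

import Mathlib

/-- Number of transitions from state `i` to state `j` in the path `ω = (s₁,…,s_T)`
(indexed `0,…,T-1`). -/
def transCount {S : Type} [DecidableEq S] {T : ℕ} (ω : Fin T → S) (i j : S) : ℕ :=
  (Finset.univ.filter (fun t : Fin (T - 1) =>
    ω ⟨t.1, by have := t.2; omega⟩ = i ∧ ω ⟨t.1 + 1, by have := t.2; omega⟩ = j)).card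

/-- Total transition count `b_{ij}(x)` of a contingency table `x`. -/
def transTotal {S : Type} [DecidableEq S] [Fintype S] {T : ℕ}
    (x : (Fin T → S) → ℕ) (i j : S) : ℕ :=
  ∑ ω : Fin T → S, x ω * transCount ω i j

def stepPath (T : ℕ) (k : ℕ) : Fin T → Fin 2 := fun t => if t.1 < k then 0 else 1

lemma fin2_eq_zero_or_one (v : Fin 2) : v = 0 ∨ v = 1 := by
  fin_cases v <;> simp

lemma card_filter_lt (n m : ℕ) :
    (Finset.univ.filter (fun t : Fin n => t.1 < m)).card = min m n := by
  rcases le_or_gt n m with h | h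
  · have : (Finset.univ.filter (fun t : Fin n => t.1 < m)) = Finset.univ := by
      apply Finset.filter_true_of_mem
      intro t _; exact lt_of_lt_of_le t.2 h
    rw [this, Finset.card_univ, Fintype.card_fin, min_eq_right h]
  · have : (Finset.univ.filter (fun t : Fin n => t.1 < m)) = Finset.Iio ⟨m, h⟩ := by
      ext t
      simp [Finset.mem_Iio, Fin.lt_def]
    rw [this, Fin.card_Iio, min_eq_left h.le]

lemma card_filter_le (n m : ℕ) :
    (Finset.univ.filter (fun t : Fin n => m ≤ t.1)).card = n - m := by
  have h := Finset.card_filter_add_card_filter_not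
    (s := (Finset.univ : Finset (Fin n))) (p := fun t : Fin n => t.1 < m)
  simp only [not_lt, Finset.card_univ, Fintype.card_fin] at h
  have h2 := card_filter_lt n m
  omega

lemma card_filter_eq (n m : ℕ) (h : m < n) :
    (Finset.univ.filter (fun t : Fin n => t.1 = m)).card = 1 := by
  have : (Finset.univ.filter (fun t : Fin n => t.1 = m)) = {⟨m, h⟩} := by
    ext t
    simp [Fin.ext_iff]
  rw [this, Finset.card_singleton]

lemma step_ite_eq_zero (c : Prop) [Decidable c] : ((if c then (0:Fin 2) else 1) = 0) ↔ c := by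
  split <;> simp_all

lemma step_ite_eq_one (c : Prop) [Decidable c] : ((if c then (0:Fin 2) else 1) = 1) ↔ ¬c := by
  split <;> simp_all

lemma transCount_step_10 {T : ℕ} (k : ℕ) : transCount (stepPath T k) 1 0 = 0 := by
  unfold transCount stepPath
  rw [Finset.card_eq_zero, Finset.filter_eq_empty_iff]
  intro t _
  simp only [step_ite_eq_zero, step_ite_eq_one]
  omega

lemma transCount_step_00 {T : ℕ} (k : ℕ) (hk : k ≤ T) :
    transCount (stepPath T k) 0 0 = k - 1 := by
  unfold transCount stepPath
  have : ∀ t : Fin (T-1),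
      ((if (t.1:ℕ) < k then (0:Fin 2) else 1) = 0 ∧ (if (t.1+1) < k then (0:Fin 2) else 1) = 0)
        ↔ t.1 < k - 1 := by
    intro t; simp only [step_ite_eq_zero]; omega
  rw [Finset.filter_congr (fun t _ => this t), card_filter_lt]
  omega

lemma transCount_step_11 {T : ℕ} (k : ℕ) :
    transCount (stepPath T k) 1 1 = (T - 1) - k := by
  unfold transCount stepPath
  have : ∀ t : Fin (T-1),
      ((if (t.1:ℕ) < k then (0:Fin 2) else 1) = 1 ∧ (if (t.1+1) < k then (0:Fin 2) else 1) = 1)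
        ↔ k ≤ t.1 := by
    intro t; simp only [step_ite_eq_one]; omega
  rw [Finset.filter_congr (fun t _ => this t), card_filter_le]

lemma transCount_step_01 {T : ℕ} (k : ℕ) (h1 : 1 ≤ k) (h2 : k ≤ T - 1) :
    transCount (stepPath T k) 0 1 = 1 := by
  unfold transCount stepPath
  have : ∀ t : Fin (T-1),
      ((if (t.1:ℕ) < k then (0:Fin 2) else 1) = 0 ∧ (if (t.1+1) < k then (0:Fin 2) else 1) = 1)
        ↔ t.1 = k - 1 := by
    intro t; simp only [step_ite_eq_zero, step_ite_eq_one]; omega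
  rw [Finset.filter_congr (fun t _ => this t), card_filter_eq]
  omega

lemma transCount_step_01_zero {T : ℕ} (k : ℕ) (h : k = 0 ∨ T ≤ k) :
    transCount (stepPath T k) 0 1 = 0 := by
  unfold transCount stepPath
  rw [Finset.card_eq_zero, Finset.filter_eq_empty_iff]
  intro t _
  simp only [step_ite_eq_zero, step_ite_eq_one]
  have := t.2
  omega

def nz {T : ℕ} (ω : Fin T → Fin 2) : ℕ := (Finset.univ.filter (fun t => ω t = 0)).card

lemma nz_le {T : ℕ} (ω : Fin T → Fin 2) : nz ω ≤ T := by
  have := Finset.card_filter_le (Finset.univ : Finset (Fin T)) (fun t => ω t = 0)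
  simpa [nz] using this

lemma eq_step_of_no10 {T : ℕ} (ω : Fin T → Fin 2) (h : transCount ω 1 0 = 0) :
    ω = stepPath T (nz ω) := by
  have hstep : ∀ t : Fin (T-1), ω ⟨t.1, by have := t.2; omega⟩ = 1 →
      ω ⟨t.1 + 1, by have := t.2; omega⟩ = 1 := by
    intro t h1
    rw [transCount, Finset.card_eq_zero, Finset.filter_eq_empty_iff] at h
    have := h (Finset.mem_univ t)
    rcases fin2_eq_zero_or_one (ω ⟨t.1 + 1, by have := t.2; omega⟩) with h0 | h0
    · exact absurd ⟨h1, h0⟩ this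
    · exact h0
  -- monotonicity on indices
  have mono : ∀ j : ℕ, ∀ hj : j < T, ∀ i : ℕ, ∀ hi : i < T, i ≤ j →
      ω ⟨i, hi⟩ = 1 → ω ⟨j, hj⟩ = 1 := by
    intro j
    induction j with
    | zero =>
      intro hj i hi hij h1
      have : i = 0 := by omega
      subst this
      exact h1
    | succ n ih =>
      intro hj i hi hij h1
      rcases Nat.lt_or_ge i (n+1) with hlt | hge
      · have hn : n < T := by omega
        have h2 : ω ⟨n, hn⟩ = 1 := ih hn i hi (by omega) h1
        have hn1 : n < T - 1 := by omega
        exact hstep ⟨n, hn1⟩ h2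
      · have : i = n + 1 := by omega
        subst this
        convert h1 using 2
  funext t
  rcases fin2_eq_zero_or_one (ω t) with h0 | h0
  · -- t < nz ω : Iic t ⊆ zeros
    have hsub : Finset.Iic t ⊆ Finset.univ.filter (fun s => ω s = 0) := by
      intro s hs
      simp only [Finset.mem_Iic] at hs
      simp only [Finset.mem_filter, Finset.mem_univ, true_and]
      rcases fin2_eq_zero_or_one (ω s) with h2 | h2
      · exact h2
      · exfalso
        have := mono t.1 t.2 s.1 s.2 hs h2
        simp only [Fin.eta] at this
        rw [h0] at this; exact absurd this (by decide)
    have hcard : t.1 + 1 ≤ nz ω := by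
      have := Finset.card_le_card hsub
      rwa [Fin.card_Iic] at this
    have hlt : t.1 < nz ω := by omega
    simp [stepPath, hlt, h0]
  · -- nz ω ≤ t
    have hsub : Finset.univ.filter (fun s => ω s = 0) ⊆ Finset.Iio t := by
      intro s hs
      simp only [Finset.mem_filter, Finset.mem_univ, true_and] at hs
      simp only [Finset.mem_Iio]
      by_contra hle
      push_neg at hle
      have := mono s.1 s.2 t.1 t.2 hle h0
      simp only [Fin.eta] at this
      rw [hs] at this; exact absurd this (by decide)
    have hcard : nz ω ≤ t.1 := by
      have := Finset.card_le_card hsub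
      rwa [Fin.card_Iio] at this
    have hlt : ¬ (t.1 < nz ω) := by omega
    simp [stepPath, hlt, h0]

lemma stepPath_ne {T : ℕ} {k l : ℕ} (hkl : k < l) (hl : l ≤ T) :
    stepPath T k ≠ stepPath T l := by
  intro h
  have hk : k < T := lt_of_lt_of_le hkl hl
  have := congrFun h ⟨k, hk⟩
  simp only [stepPath, lt_irrefl, if_neg (lt_irrefl k), if_pos hkl] at this
  exact absurd this (by decide)

lemma sum_eq_one_aux {α : Type*} [DecidableEq α] [Fintype α] {f : α → ℕ}
    (h : ∑ a, f a = 1) : ∃ a, f a = 1 ∧ ∀ b, b ≠ a → f b = 0 := by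
  have hne : ∑ a, f a ≠ 0 := by omega
  obtain ⟨a, -, ha⟩ := Finset.exists_ne_zero_of_sum_ne_zero hne
  have he := Finset.add_sum_erase Finset.univ f (Finset.mem_univ a)
  rw [h] at he
  have hfa : f a = 1 := by omega
  have hz : ∑ b ∈ Finset.univ.erase a, f b = 0 := by omega
  refine ⟨a, hfa, fun b hb => ?_⟩
  exact (Finset.sum_eq_zero_iff.mp hz) b (Finset.mem_erase.mpr ⟨hb, Finset.mem_univ b⟩)

lemma decomp {T : ℕ} (hT : 2 ≤ T) (z : (Fin T → Fin 2) → ℕ)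
    (h10 : transTotal z 1 0 = 0) (h01 : transTotal z 0 1 = 1) :
    ∃ m n a, 1 ≤ a ∧ a ≤ T - 1 ∧
      z = (fun ω => (if ω = stepPath T T then m else 0) +
        (if ω = stepPath T 0 then n else 0) + (if ω = stepPath T a then 1 else 0)) ∧
      transTotal z 0 0 = m * (T - 1) + (a - 1) ∧
      transTotal z 1 1 = n * (T - 1) + ((T - 1) - a) := by
  classical
  -- every path in the support is a step path
  have hsupp : ∀ ω, z ω ≠ 0 → ω = stepPath T (nz ω) := by
    intro ω hω
    have h0 := (Finset.sum_eq_zero_iff.mp h10) ω (Finset.mem_univ ω)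
    rcases Nat.mul_eq_zero.mp h0 with h | h
    · exact absurd h hω
    · exact eq_step_of_no10 ω h
  -- the unique path with a 0→1 transition
  obtain ⟨ω₀, hω₀, huniq⟩ := sum_eq_one_aux h01
  have hz₀ : z ω₀ = 1 := Nat.eq_one_of_mul_eq_one_right hω₀
  have hc₀ : transCount ω₀ 0 1 = 1 := Nat.eq_one_of_mul_eq_one_left hω₀
  set a := nz ω₀ with ha_def
  have hω₀step : ω₀ = stepPath T a := hsupp ω₀ (by omega)
  have ha_le : a ≤ T := nz_le ω₀
  have ha : 1 ≤ a ∧ a ≤ T - 1 := by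
    by_contra hcon
    have : a = 0 ∨ T ≤ a := by omega
    have := transCount_step_01_zero (T := T) a this
    rw [hω₀step] at hc₀
    omega
  -- support is contained in the three step paths
  have hsupp3 : ∀ ω, z ω ≠ 0 →
      ω ∈ ({stepPath T T, stepPath T 0, stepPath T a} : Finset (Fin T → Fin 2)) := by
    intro ω hω
    by_cases hωeq : ω = ω₀
    · subst hωeq
      simp [hω₀step]
    · have h0 := huniq ω hωeq
      rcases Nat.mul_eq_zero.mp h0 with h | h
      · exact absurd h hω
      · have hωs := hsupp ω hω
        set k := nz ω with hk_def
        have hk_le : k ≤ T := nz_le ω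
        have hk0 : k = 0 ∨ k = T := by
          by_contra hcon
          have h1k : 1 ≤ k ∧ k ≤ T - 1 := by omega
          have := transCount_step_01 (T := T) k h1k.1 h1k.2
          rw [hωs] at h
          omega
        rcases hk0 with h' | h'
        · rw [hωs, h']; simp
        · rw [hωs, h']; simp
  -- distinctness
  have hne1 : stepPath T 0 ≠ stepPath T T := stepPath_ne (by omega) le_rfl
  have hne2 : stepPath T 0 ≠ stepPath T a := stepPath_ne (by omega) (by omega)
  have hne3 : stepPath T a ≠ stepPath T T := stepPath_ne (by omega) le_rfl
  have hz_a : z (stepPath T a) = 1 := by rw [← hω₀step]; exact hz₀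
  have key : ∀ i j : Fin 2, transTotal z i j =
      ∑ ω ∈ ({stepPath T T, stepPath T 0, stepPath T a} : Finset (Fin T → Fin 2)),
        z ω * transCount ω i j := by
    intro i j
    refine (Finset.sum_subset (Finset.subset_univ _) ?_).symm
    intro ω _ hω
    rcases Nat.eq_zero_or_pos (z ω) with h | h
    · rw [h, zero_mul]
    · exact absurd (hsupp3 ω (by omega)) hω
  have hsum : ∀ i j : Fin 2, transTotal z i j =
      z (stepPath T T) * transCount (stepPath T T) i j +
      (z (stepPath T 0) * transCount (stepPath T 0) i j +
       z (stepPath T a) * transCount (stepPath T a) i j) := by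
    intro i j
    rw [key i j, Finset.sum_insert (by simp [hne1.symm, hne3.symm]),
      Finset.sum_insert (by simp [hne2]), Finset.sum_singleton]
  refine ⟨z (stepPath T T), z (stepPath T 0), a, ha.1, ha.2, ?_, ?_, ?_⟩
  · funext ω
    by_cases h1 : ω = stepPath T T
    · subst h1; simp [hne1.symm, hne3.symm]
    · by_cases h2 : ω = stepPath T 0
      · subst h2; simp [h1, hne2]
      · by_cases h3 : ω = stepPath T a
        · subst h3; simp [h1, h2, hz_a]
        · simp only [if_neg h1, if_neg h2, if_neg h3, add_zero, zero_add]
          by_contra hne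
          have := hsupp3 ω hne
          simp [h1, h2, h3] at this
  · rw [hsum 0 0, transCount_step_00 _ le_rfl, transCount_step_00 _ (by omega),
      transCount_step_00 _ (by omega), hz_a]
    omega
  · rw [hsum 1 1, transCount_step_11, transCount_step_11, transCount_step_11, hz_a]
    have h1 : T - 1 - T = 0 := by omega
    have h2 : T - 1 - 0 = T - 1 := by omega
    rw [h1, h2]
    omega

/-- a contingency table with `b₂₁ = 0` and `b₁₂ = 1` is the
unique table in its fiber. (State `0` is the paper's `1`, state `1` is the
paper's `2`.) -/
theorem stmt12 {T : ℕ} (hT : 2 ≤ T) (x : (Fin T → Fin 2) → ℕ)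
    (hb10 : transTotal x 1 0 = 0) (hb01 : transTotal x 0 1 = 1)
    (y : (Fin T → Fin 2) → ℕ)
    (hy : ∀ i j : Fin 2, transTotal y i j = transTotal x i j) :
    y = x := by
  obtain ⟨m, n, a, ha1, ha2, hx, hx00, hx11⟩ := decomp hT x hb10 hb01
  obtain ⟨m', n', a', ha1', ha2', hy', hy00, hy11⟩ :=
    decomp hT y (by rw [hy 1 0, hb10]) (by rw [hy 0 1, hb01])
  rw [hy 0 0, hx00] at hy00
  rw [hy 1 1, hx11] at hy11
  have hmod : ∀ p q : ℕ, q < T - 1 → (p * (T - 1) + q) % (T - 1) = q := by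
    intro p q hq
    rw [Nat.mul_comm, Nat.mul_add_mod, Nat.mod_eq_of_lt hq]
  have haa : a' = a := by
    have h1 := hmod m' (a' - 1) (by omega)
    have h2 := hmod m (a - 1) (by omega)
    rw [← hy00] at h1
    omega
  have hmm : m' = m := by
    have h : m' * (T - 1) = m * (T - 1) := by omega
    exact Nat.eq_of_mul_eq_mul_right (by omega) h
  have hnn : n' = n := by
    have h : n' * (T - 1) = n * (T - 1) := by omega
    exact Nat.eq_of_mul_eq_mul_right (by omega) h
  rw [hx, hy', haa, hmm, hnn]
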